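/- Let k > 0 and z̄ > 0. Then there exists κ₀ > 0 such that for every κ ≥ κ₀ there exists t̄ ∈ (0, z̄) with Ψ'(t̄) - κ Ψ'(k + t̄) = 0. -/

import Mathlib

/-- The digamma function `Ψ(x) = (log Γ)'(x)`. -/
noncomputable def digamma (x : ℝ) : ℝ :=
  deriv (fun y => Real.log (Real.Gamma y)) x

lemma analyticAt_complex_Gamma {x : ℝ} (hx : 0 < x) : AnalyticAt ℂ Complex.Gamma (x : ℂ) := by
  have h0 : AnalyticAt ℂ (fun s => (Complex.Gamma s)⁻¹) (x : ℂ) :=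
    (Complex.differentiable_one_div_Gamma.differentiableOn.analyticOnNhd isOpen_univ) _
      (Set.mem_univ _)
  have hne : (Complex.Gamma (x : ℂ))⁻¹ ≠ 0 := by
    rw [Complex.Gamma_ofReal]
    simpa using (Real.Gamma_pos_of_pos hx).ne'
  have := h0.inv hne
  have e : (fun s => (Complex.Gamma s)⁻¹)⁻¹ = Complex.Gamma := by
    funext s
    simp
  rwa [e] at this

lemma analyticAt_real_Gamma {x : ℝ} (hx : 0 < x) : AnalyticAt ℝ Real.Gamma x := by
  have h1 : AnalyticAt ℝ (fun y : ℝ => (Complex.Gamma (y : ℂ)).re) x :=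
    (Complex.reCLM.analyticAt _).comp
      (((analyticAt_complex_Gamma hx).restrictScalars).comp (Complex.ofRealCLM.analyticAt x))
  refine h1.congr (Filter.Eventually.of_forall fun y => ?_)
  show (Complex.Gamma (y : ℂ)).re = Real.Gamma y
  rw [Complex.Gamma_ofReal, Complex.ofReal_re]

lemma contDiffOn_logGamma :
    ContDiffOn ℝ 2 (fun y => Real.log (Real.Gamma y)) (Set.Ioi 0) := by
  intro x hx
  exact (((analyticAt_real_Gamma hx).contDiffAt).log
    (Real.Gamma_pos_of_pos hx).ne').contDiffWithinAt

lemma hasDerivAt_logGamma {x : ℝ} (hx : 0 < x) :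
    HasDerivAt (fun y => Real.log (Real.Gamma y)) (digamma x) x := by
  have hd : DifferentiableAt ℝ (fun y => Real.log (Real.Gamma y)) x :=
    (((analyticAt_real_Gamma hx).contDiffAt (n := 2)).log
      (Real.Gamma_pos_of_pos hx).ne').differentiableAt (by norm_num)
  exact hd.hasDerivAt

lemma contDiffOn_digamma : ContDiffOn ℝ 1 digamma (Set.Ioi 0) :=
  contDiffOn_logGamma.deriv_of_isOpen isOpen_Ioi (by norm_num)

lemma differentiableAt_digamma {x : ℝ} (hx : 0 < x) : DifferentiableAt ℝ digamma x :=
  ((contDiffOn_digamma.differentiableOn one_ne_zero).differentiableAt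
    (Ioi_mem_nhds hx))

lemma hasDerivAt_digamma {x : ℝ} (hx : 0 < x) :
    HasDerivAt digamma (deriv digamma x) x :=
  (differentiableAt_digamma hx).hasDerivAt

lemma continuousOn_trigamma : ContinuousOn (deriv digamma) (Set.Ioi 0) :=
  contDiffOn_digamma.continuousOn_deriv_of_isOpen isOpen_Ioi le_rfl

lemma monotoneOn_digamma : MonotoneOn digamma (Set.Ioi 0) := by
  have h := Real.convexOn_log_Gamma.monotoneOn_deriv
    (fun x hx => (hasDerivAt_logGamma hx).differentiableAt)
  exact h

lemma trigamma_nonneg {x : ℝ} (hx : 0 < x) : 0 ≤ deriv digamma x := by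
  have hd := hasDerivAt_digamma hx
  rw [hasDerivAt_iff_tendsto_slope] at hd
  have hd' : Filter.Tendsto (slope digamma x) (nhdsWithin x (Set.Ioi x))
      (nhds (deriv digamma x)) :=
    hd.mono_left (nhdsWithin_mono _ (fun y hy => ne_of_gt hy))
  refine ge_of_tendsto hd' ?_
  filter_upwards [self_mem_nhdsWithin] with y hy
  have hxy : x < y := hy
  rw [slope_def_field]
  have hmono : digamma x ≤ digamma y :=
    monotoneOn_digamma hx (lt_trans hx hxy) hxy.le
  have : (0:ℝ) < y - x := by linarith
  exact div_nonneg (by linarith) this.le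

lemma digamma_rec {y : ℝ} (hy : 0 < y) : digamma (y + 1) = 1 / y + digamma y := by
  have heq : (fun t => Real.log (Real.Gamma (t + 1)))
      =ᶠ[nhds y] (fun t => Real.log t + Real.log (Real.Gamma t)) := by
    filter_upwards [Ioi_mem_nhds hy] with t ht
    have ht' : (0:ℝ) < t := ht
    rw [Real.Gamma_add_one ht'.ne', Real.log_mul ht'.ne' (Real.Gamma_pos_of_pos ht').ne']
  have h1 : HasDerivAt (fun t => Real.log (Real.Gamma (t + 1))) (digamma (y + 1) * 1) y := by
    have := (hasDerivAt_logGamma (by linarith : (0:ℝ) < y + 1)).comp y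
      ((hasDerivAt_id y).add_const 1)
    exact this
  have h2 : HasDerivAt (fun t => Real.log t + Real.log (Real.Gamma t))
      (1 / y + digamma y) y := by
    have := (Real.hasDerivAt_log hy.ne').add (hasDerivAt_logGamma hy)
    simp only [one_div]
    exact this
  have h1' : HasDerivAt (fun t => Real.log t + Real.log (Real.Gamma t))
      (digamma (y + 1) * 1) y := h1.congr_of_eventuallyEq heq.symm
  have := h1'.unique h2
  simpa using this

lemma trigamma_rec {y : ℝ} (hy : 0 < y) :
    deriv digamma (y + 1) = -(1 / y ^ 2) + deriv digamma y := by
  have heq : (fun t => digamma (t + 1)) =ᶠ[nhds y] (fun t => 1 / t + digamma t) := by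
    filter_upwards [Ioi_mem_nhds hy] with t ht
    exact digamma_rec ht
  have h1 : HasDerivAt (fun t => digamma (t + 1)) (deriv digamma (y + 1) * 1) y :=
    (hasDerivAt_digamma (by linarith : (0:ℝ) < y + 1)).comp y
      ((hasDerivAt_id y).add_const 1)
  have h2 : HasDerivAt (fun t => 1 / t + digamma t)
      (-(1 / y ^ 2) + deriv digamma y) y := by
    have hinv : HasDerivAt (fun t : ℝ => t⁻¹) (-(y ^ 2)⁻¹) y := hasDerivAt_inv hy.ne'
    have := hinv.add (hasDerivAt_digamma hy)
    simp only [one_div]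
    exact this
  have h1' : HasDerivAt (fun t => 1 / t + digamma t)
      (deriv digamma (y + 1) * 1) y := h1.congr_of_eventuallyEq heq.symm
  have := h1'.unique h2
  simpa using this

lemma trigamma_lb {y : ℝ} (hy : 0 < y) : 1 / y ^ 2 ≤ deriv digamma y := by
  have h := trigamma_rec hy
  have h2 := trigamma_nonneg (by linarith : (0:ℝ) < y + 1)
  rw [h] at h2
  linarith

lemma trigamma_pos {y : ℝ} (hy : 0 < y) : 0 < deriv digamma y :=
  lt_of_lt_of_le (by positivity) (trigamma_lb hy)

/-- For any `k > 0` and `z̄ > 0`, if `κ` is sufficiently large then there exists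
`t̄ ∈ (0, z̄)` with `Ψ'(t̄) - κ Ψ'(k + t̄) = 0`. -/
theorem exists_critical_point (k z : ℝ) (hk : 0 < k) (hz : 0 < z) :
    ∃ κ₀ > (0 : ℝ), ∀ κ ≥ κ₀, ∃ t ∈ Set.Ioo (0 : ℝ) z,
      deriv digamma t - κ * deriv digamma (k + t) = 0 := by
  set φ := deriv digamma with hφ
  have hz2 : (0:ℝ) < z / 2 := by linarith
  have hkz2 : (0:ℝ) < k + z / 2 := by linarith
  have hφkz2 : 0 < φ (k + z / 2) := trigamma_pos hkz2
  -- bound of φ on [k, k + z/2]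
  obtain ⟨M, hM⟩ : ∃ M, ∀ x ∈ Set.Icc k (k + z / 2), ‖φ x‖ ≤ M := by
    have hsub : Set.Icc k (k + z / 2) ⊆ Set.Ioi 0 := fun x hx => lt_of_lt_of_le hk hx.1
    exact (isCompact_Icc).exists_bound_of_continuousOn (continuousOn_trigamma.mono hsub)
  have hM0 : 0 ≤ M := le_trans (norm_nonneg _) (hM k ⟨le_rfl, by linarith⟩)
  refine ⟨(φ (z / 2) + 1) / φ (k + z / 2), ?_, ?_⟩
  · have h1 : 0 < φ (z / 2) + 1 := by have := trigamma_pos hz2; linarith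
    positivity
  intro κ hκ
  have hκ0 : 0 < κ := lt_of_lt_of_le (by
    have h1 : 0 < φ (z / 2) + 1 := by have := trigamma_pos hz2; linarith
    positivity) hκ
  -- value at z/2 is ≤ -1
  have hval2 : φ (z / 2) - κ * φ (k + z / 2) ≤ -1 := by
    have : (φ (z / 2) + 1) / φ (k + z / 2) * φ (k + z / 2) ≤ κ * φ (k + z / 2) :=
      mul_le_mul_of_nonneg_right hκ hφkz2.le
    rw [div_mul_cancel₀ _ hφkz2.ne'] at this
    linarith
  -- choose small t₀
  have hκM : (0:ℝ) < κ * (M + 1) := by positivity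
  set t₀ := min (z / 4) (1 / Real.sqrt (κ * (M + 1))) with ht₀
  have hsq : (0:ℝ) < Real.sqrt (κ * (M + 1)) := Real.sqrt_pos.mpr hκM
  have ht₀pos : 0 < t₀ := lt_min (by linarith) (by positivity)
  have ht₀lt : t₀ < z / 2 := lt_of_le_of_lt (min_le_left _ _) (by linarith)
  -- lower bound on 1/t₀^2
  have ht₀le : t₀ ≤ 1 / Real.sqrt (κ * (M + 1)) := min_le_right _ _
  have hlb : κ * (M + 1) ≤ 1 / t₀ ^ 2 := by
    have h1 : t₀ ^ 2 ≤ (1 / Real.sqrt (κ * (M + 1))) ^ 2 :=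
      pow_le_pow_left₀ ht₀pos.le ht₀le 2
    have h2 : (1 / Real.sqrt (κ * (M + 1))) ^ 2 = 1 / (κ * (M + 1)) := by
      rw [div_pow, one_pow, Real.sq_sqrt hκM.le]
    rw [h2] at h1
    have ht₀2 : (0:ℝ) < t₀ ^ 2 := by positivity
    rw [le_div_iff₀ ht₀2]
    calc κ * (M + 1) * t₀ ^ 2 ≤ κ * (M + 1) * (1 / (κ * (M + 1))) :=
          mul_le_mul_of_nonneg_left h1 hκM.le
      _ = 1 := by field_simp
  have hval1 : 0 < φ t₀ - κ * φ (k + t₀) := by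
    have hφt₀ : κ * (M + 1) ≤ φ t₀ := le_trans hlb (trigamma_lb ht₀pos)
    have hφkt₀ : φ (k + t₀) ≤ M := by
      have hmem : k + t₀ ∈ Set.Icc k (k + z / 2) := ⟨by linarith, by linarith⟩
      exact le_trans (le_abs_self _) (hM _ hmem)
    nlinarith
  -- IVT
  set f := fun t => φ t - κ * φ (k + t) with hf
  have hcont : ContinuousOn f (Set.Icc t₀ (z / 2)) := by
    have hsub1 : Set.Icc t₀ (z / 2) ⊆ Set.Ioi 0 := fun x hx => lt_of_lt_of_le ht₀pos hx.1
    have hsub2 : ∀ x ∈ Set.Icc t₀ (z / 2), k + x ∈ Set.Ioi (0:ℝ) := fun x hx => by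
      have := lt_of_lt_of_le ht₀pos hx.1; simp only [Set.mem_Ioi]; linarith
    exact (continuousOn_trigamma.mono hsub1).sub
      (continuousOn_const.mul (continuousOn_trigamma.comp
        (continuousOn_const.add continuousOn_id) hsub2))
  have hneg : f (z / 2) < 0 := lt_of_le_of_lt hval2 (by norm_num)
  have h0mem : (0:ℝ) ∈ Set.Ioo (f (z / 2)) (f t₀) := ⟨hneg, hval1⟩
  obtain ⟨t, htmem, htval⟩ := intermediate_value_Ioo' ht₀lt.le hcont h0mem
  exact ⟨t, ⟨lt_trans ht₀pos htmem.1, lt_trans htmem.2 (by linarith)⟩, htval⟩
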